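/- arXiv:2511.03946 — 2 statements merged into one kernel-verified Lean document; each statement's English description precedes it below -/
import Mathlib

section
/- Let C be a monoidal category, A a C-actegory, M a monoid in C, and Σ : A → A a functor equipped with a tensorial strength with respect to the Pt(C)-action on A (where Pt(C) is the pointed monoidal category acting via underlying objects). Regard M as a pointed object via its unit. Then Σ lifts to an endofunctor on the category of M-actions in A: for an M-action (a, act : a ⊳ M → a), the object Σ(a) carries the M-action defined by Σ(a) ⊳ M → Σ(a ⊳ M) → Σ(a), where the first map is the strength at (a, M with point η_M) and the second is Σ(act); this structure satisfies the two M-action axioms (associativity and unit), and Σ sends M-action morphisms to M-action morphisms. -/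
open CategoryTheory MonoidalCategory Limits

universe v u v₁ u₁ v₂ u₂ v₃ u₃

/-- An actegory: a category `A` with an action of a monoidal category `C`, with
associator and unitor isomorphisms satisfying the pentagon and triangle axioms. -/
structure Actegory (C : Type u) [Category.{v} C] [MonoidalCategory C]
    (A : Type u₁) [Category.{v₁} A] where
  act : A → C → A
  map₁ : ∀ {a b : A}, (a ⟶ b) → ∀ (x : C), act a x ⟶ act b x
  map₂ : ∀ (a : A) {x y : C}, (x ⟶ y) → (act a x ⟶ act a y)
  map₁_id : ∀ (a : A) (x : C), map₁ (𝟙 a) x = 𝟙 (act a x)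
  map₂_id : ∀ (a : A) (x : C), map₂ a (𝟙 x) = 𝟙 (act a x)
  map₁_comp : ∀ {a b c : A} (f : a ⟶ b) (g : b ⟶ c) (x : C),
    map₁ (f ≫ g) x = map₁ f x ≫ map₁ g x
  map₂_comp : ∀ (a : A) {x y z : C} (f : x ⟶ y) (g : y ⟶ z),
    map₂ a (f ≫ g) = map₂ a f ≫ map₂ a g
  exchange : ∀ {a b : A} {x y : C} (f : a ⟶ b) (g : x ⟶ y),
    map₁ f x ≫ map₂ b g = map₂ a g ≫ map₁ f y
  assoc : ∀ (a : A) (x y : C), act (act a x) y ≅ act a (x ⊗ y)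
  runit : ∀ (a : A), act a (𝟙_ C) ≅ a
  assoc_nat₁ : ∀ {a b : A} (f : a ⟶ b) (x y : C),
    map₁ (map₁ f x) y ≫ (assoc b x y).hom = (assoc a x y).hom ≫ map₁ f (x ⊗ y)
  assoc_nat₂ : ∀ (a : A) {x x' : C} (f : x ⟶ x') (y : C),
    map₁ (map₂ a f) y ≫ (assoc a x' y).hom = (assoc a x y).hom ≫ map₂ a (f ▷ y)
  assoc_nat₃ : ∀ (a : A) (x : C) {y y' : C} (g : y ⟶ y'),
    map₂ (act a x) g ≫ (assoc a x y').hom = (assoc a x y).hom ≫ map₂ a (x ◁ g)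
  runit_nat : ∀ {a b : A} (f : a ⟶ b),
    map₁ f (𝟙_ C) ≫ (runit b).hom = (runit a).hom ≫ f
  pentagon : ∀ (a : A) (x y z : C),
    (assoc (act a x) y z).hom ≫ (assoc a x (y ⊗ z)).hom =
      map₁ (assoc a x y).hom z ≫ (assoc a (x ⊗ y) z).hom ≫ map₂ a (α_ x y z).hom
  triangle : ∀ (a : A) (y : C),
    (assoc a (𝟙_ C) y).hom ≫ map₂ a (λ_ y).hom = map₁ (runit a).hom y

variable {C : Type u} [Category.{v} C] [MonoidalCategory C]
  {A : Type u₁} [Category.{v₁} A] {B : Type u₂} [Category.{v₂} B]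

/-- A tensorial strength for a functor `F` between `C`-actegories. -/
structure Strength (JA : Actegory C A) (JB : Actegory C B) (F : A ⥤ B) where
  σ : ∀ (a : A) (x : C), JB.act (F.obj a) x ⟶ F.obj (JA.act a x)
  nat₁ : ∀ {a a' : A} (f : a ⟶ a') (x : C),
    JB.map₁ (F.map f) x ≫ σ a' x = σ a x ≫ F.map (JA.map₁ f x)
  nat₂ : ∀ (a : A) {x x' : C} (g : x ⟶ x'),
    JB.map₂ (F.obj a) g ≫ σ a x' = σ a x ≫ F.map (JA.map₂ a g)
  pentagon : ∀ (a : A) (x y : C),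
    JB.map₁ (σ a x) y ≫ σ (JA.act a x) y ≫ F.map (JA.assoc a x y).hom =
      (JB.assoc (F.obj a) x y).hom ≫ σ a (x ⊗ y)
  triangle : ∀ (a : A),
    σ a (𝟙_ C) ≫ F.map (JA.runit a).hom = (JB.runit (F.obj a)).hom


/-- The pointed tensor on the coslice category `Pt(C) = I/C`. -/
def pointedTensor (x y : Under (𝟙_ C)) : Under (𝟙_ C) :=
  Under.mk ((ρ_ (𝟙_ C)).inv ≫ (x.hom ⊗ₘ y.hom))

/-- A tensorial strength for `F` with respect to the actions of the pointed monoidal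
category `Pt(C)` on `A` and `B`, where a pointed object acts via its underlying object:
naturality (also in point-preserving morphisms), and the strength pentagon and triangle
axioms with respect to the pointed tensor and the pointed unit `(I, id)`. -/
structure PointedStrength (JA : Actegory C A) (JB : Actegory C B) (F : A ⥤ B) where
  σ : ∀ (a : A) (x : Under (𝟙_ C)), JB.act (F.obj a) x.right ⟶ F.obj (JA.act a x.right)
  nat₁ : ∀ {a a' : A} (f : a ⟶ a') (x : Under (𝟙_ C)),
    JB.map₁ (F.map f) x.right ≫ σ a' x = σ a x ≫ F.map (JA.map₁ f x.right)
  nat₂ : ∀ (a : A) {x x' : Under (𝟙_ C)} (g : x ⟶ x'),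
    JB.map₂ (F.obj a) g.right ≫ σ a x' = σ a x ≫ F.map (JA.map₂ a g.right)
  pentagon : ∀ (a : A) (x y : Under (𝟙_ C)),
    JB.map₁ (σ a x) y.right ≫ σ (JA.act a x.right) y ≫
        F.map (JA.assoc a x.right y.right).hom =
      (JB.assoc (F.obj a) x.right y.right).hom ≫ σ a (pointedTensor x y)
  triangle : ∀ (a : A),
    σ a (Under.mk (𝟙 (𝟙_ C))) ≫ F.map (JA.runit a).hom = (JB.runit (F.obj a)).hom


variable (J : Actegory C A) (M : Mon C) (S : A ⥤ A)

/-- An action of a monoid `M` (in `C`) on an object of a `C`-actegory. -/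
structure MAction where
  a : A
  act : J.act a M.X ⟶ a
  act_assoc : J.map₁ act M.X ≫ act = (J.assoc a M.X M.X).hom ≫ J.map₂ a M.mon.mul ≫ act
  act_unit : (J.runit a).inv ≫ J.map₂ a M.mon.one ≫ act = 𝟙 a

/-- The lifted `M`-action on `Σ(a)`: the strength at `(a, (M, η))` followed by `Σ(act)`. -/
def liftAct (ps : PointedStrength J J S) (N : MAction J M) :
    J.act (S.obj N.a) M.X ⟶ S.obj N.a :=
  ps.σ N.a (Under.mk M.mon.one) ≫ S.map N.act

/-- A pointed-strong endofunctor `Σ` lifts to the category of `M`-actions: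
the lifted structure map satisfies the two `M`-action axioms, and `Σ` sends `M`-action
morphisms to `M`-action morphisms. -/
theorem pointed_strong_lifts_to_actions (ps : PointedStrength J J S) :
    (∀ N : MAction J M,
      (J.map₁ (liftAct J M S ps N) M.X ≫ liftAct J M S ps N =
        (J.assoc (S.obj N.a) M.X M.X).hom ≫ J.map₂ (S.obj N.a) M.mon.mul ≫ liftAct J M S ps N) ∧
      ((J.runit (S.obj N.a)).inv ≫ J.map₂ (S.obj N.a) M.mon.one ≫ liftAct J M S ps N =
        𝟙 (S.obj N.a))) ∧
    (∀ (N N' : MAction J M) (f : N.a ⟶ N'.a),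
      J.map₁ f M.X ≫ N'.act = N.act ≫ f →
      J.map₁ (S.map f) M.X ≫ liftAct J M S ps N' = liftAct J M S ps N ≫ S.map f) := by
  -- point-preserving morphisms used below
  have hmul : (pointedTensor (Under.mk M.mon.one) (Under.mk M.mon.one)).hom ≫ M.mon.mul =
      (Under.mk M.mon.one).hom := by
    simp [pointedTensor, MonoidalCategory.tensorHom_def]
  have hunit : (Under.mk (𝟙 (𝟙_ C))).hom ≫ M.mon.one = (Under.mk M.mon.one).hom := by simp
  refine ⟨fun N => ⟨?_, ?_⟩, fun N N' f hf => ?_⟩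
  · -- associativity
    have nat := ps.nat₂ N.a (Under.homMk M.mon.mul hmul :
      pointedTensor (Under.mk M.mon.one) (Under.mk M.mon.one) ⟶ Under.mk M.mon.one)
    have pent := ps.pentagon N.a (Under.mk M.mon.one) (Under.mk M.mon.one)
    simp only [Under.mk_right, Under.homMk_right] at nat pent
    change J.map₂ (S.obj N.a) M.mon.mul ≫ _ = _ ≫ S.map (J.map₂ N.a M.mon.mul) at nat
    calc J.map₁ (liftAct J M S ps N) M.X ≫ liftAct J M S ps N
        = J.map₁ (ps.σ N.a (Under.mk M.mon.one)) M.X ≫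
            (J.map₁ (S.map N.act) M.X ≫ ps.σ N.a (Under.mk M.mon.one)) ≫ S.map N.act := by
          simp [liftAct, J.map₁_comp]
      _ = J.map₁ (ps.σ N.a (Under.mk M.mon.one)) M.X ≫
            ps.σ (J.act N.a M.X) (Under.mk M.mon.one) ≫ S.map (J.map₁ N.act M.X) ≫
            S.map N.act := by
          have h1 := ps.nat₁ N.act (Under.mk M.mon.one)
          simp only [Under.mk_right] at h1
          rw [h1]; simp
      _ = J.map₁ (ps.σ N.a (Under.mk M.mon.one)) M.X ≫
            ps.σ (J.act N.a M.X) (Under.mk M.mon.one) ≫ S.map (J.assoc N.a M.X M.X).hom ≫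
            S.map (J.map₂ N.a M.mon.mul) ≫ S.map N.act := by
          rw [← S.map_comp, N.act_assoc]; simp
      _ = (J.assoc (S.obj N.a) M.X M.X).hom ≫
            ps.σ N.a (pointedTensor (Under.mk M.mon.one) (Under.mk M.mon.one)) ≫
            S.map (J.map₂ N.a M.mon.mul) ≫ S.map N.act := by
          rw [reassoc_of% pent]; exact Category.assoc _ _ _
      _ = (J.assoc (S.obj N.a) M.X M.X).hom ≫ J.map₂ (S.obj N.a) M.mon.mul ≫
            liftAct J M S ps N := by
          rw [liftAct, reassoc_of% nat]; exact congrArg _ (Category.assoc _ _ _).symm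
  · -- unit
    have nat := ps.nat₂ N.a (Under.homMk M.mon.one hunit :
      Under.mk (𝟙 (𝟙_ C)) ⟶ Under.mk M.mon.one)
    simp only [Under.mk_right, Under.homMk_right] at nat
    change J.map₂ (S.obj N.a) M.mon.one ≫ _ = _ ≫ S.map (J.map₂ N.a M.mon.one) at nat
    have hu : J.map₂ N.a M.mon.one ≫ N.act = (J.runit N.a).hom := by
      have h2 := N.act_unit
      rw [Iso.inv_comp_eq] at h2
      simpa using h2
    calc (J.runit (S.obj N.a)).inv ≫ J.map₂ (S.obj N.a) M.mon.one ≫ liftAct J M S ps N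
        = (J.runit (S.obj N.a)).inv ≫
            (J.map₂ (S.obj N.a) M.mon.one ≫ ps.σ N.a (Under.mk M.mon.one)) ≫ S.map N.act := by
          simp [liftAct]
      _ = (J.runit (S.obj N.a)).inv ≫ ps.σ N.a (Under.mk (𝟙 (𝟙_ C))) ≫
            S.map (J.map₂ N.a M.mon.one ≫ N.act) := by
          simp only [Category.assoc, S.map_comp]
          rw [reassoc_of% nat]
      _ = (J.runit (S.obj N.a)).inv ≫ ps.σ N.a (Under.mk (𝟙 (𝟙_ C))) ≫
            S.map (J.runit N.a).hom := by rw [hu]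
      _ = 𝟙 (S.obj N.a) := by rw [ps.triangle]; simp
  · -- morphisms
    calc J.map₁ (S.map f) M.X ≫ liftAct J M S ps N'
        = (J.map₁ (S.map f) M.X ≫ ps.σ N'.a (Under.mk M.mon.one)) ≫ S.map N'.act := by
          simp [liftAct]
      _ = ps.σ N.a (Under.mk M.mon.one) ≫ S.map (J.map₁ f M.X ≫ N'.act) := by
          have h3 := ps.nat₁ f (Under.mk M.mon.one)
          simp only [Under.mk_right] at h3
          rw [h3]; simp
      _ = liftAct J M S ps N ≫ S.map f := by rw [hf, liftAct]; simp
end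

section
/- Let C be a monoidal category acting on a category A (a C-actegory) such that A has an initial object 0 which is preserved by the action (i.e. the canonical map 0 → 0 ⊳ b is invertible for every b in C). Then the product category C × A carries a left-skew monoidal structure with tensor (a, x) ⊗' (b, y) := (a ⊗ b, x ⊳ b), unit J := (I, 0), associator (α_C, α_A), right unitor (ρ⁻¹, ρ⁻¹) : p → p ⊗' J, and left unitor (λ, !) : J ⊗' p → p where ! is the unique map out of the initial object; all five skew-monoidal axioms hold. Moreover this skew monoidal category is associative (the associator is invertible) and right-unital (the right unitor is invertible). -/
open CategoryTheory MonoidalCategory Limits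

universe v u v₁ u₁ v₂ u₂ v₃ u₃

variable {C : Type u} [Category.{v} C] [MonoidalCategory C]
  {A : Type u₁} [Category.{v₁} A] {B : Type u₂} [Category.{v₂} B]

/-- The data of a (left-)skew monoidal structure. -/
structure SkewMonoidalStruct (S : Type u₂) [Category.{v₂} S] where
  tensor : S → S → S
  tmap : ∀ {a b c d : S}, (a ⟶ b) → (c ⟶ d) → (tensor a c ⟶ tensor b d)
  unit : S
  assoc : ∀ a b c : S, tensor (tensor a b) c ⟶ tensor a (tensor b c)
  lunit : ∀ a : S, tensor unit a ⟶ a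
  runit : ∀ a : S, a ⟶ tensor a unit

/-- The axioms of a left-skew monoidal category: functoriality and naturality of the data,
and the five skew-monoidal axioms (pentagon, rectangle, left, right, triangle). -/
def IsSkewMonoidal {S : Type u₂} [Category.{v₂} S] (K : SkewMonoidalStruct S) : Prop :=
  (∀ a c : S, K.tmap (𝟙 a) (𝟙 c) = 𝟙 (K.tensor a c)) ∧
  (∀ {a b c d e f : S} (g : a ⟶ b) (g' : b ⟶ c) (h : d ⟶ e) (h' : e ⟶ f),
    K.tmap (g ≫ g') (h ≫ h') = K.tmap g h ≫ K.tmap g' h') ∧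
  -- naturality of the associator and the unitors
  (∀ {a a' b b' c c' : S} (f : a ⟶ a') (g : b ⟶ b') (h : c ⟶ c'),
    K.tmap (K.tmap f g) h ≫ K.assoc a' b' c' = K.assoc a b c ≫ K.tmap f (K.tmap g h)) ∧
  (∀ {a a' : S} (f : a ⟶ a'), K.tmap (𝟙 K.unit) f ≫ K.lunit a' = K.lunit a ≫ f) ∧
  (∀ {a a' : S} (f : a ⟶ a'), K.runit a ≫ K.tmap f (𝟙 K.unit) = f ≫ K.runit a') ∧
  -- pentagon
  (∀ a b c d : S,
    K.tmap (K.assoc a b c) (𝟙 d) ≫ K.assoc a (K.tensor b c) d ≫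
        K.tmap (𝟙 a) (K.assoc b c d) =
      K.assoc (K.tensor a b) c d ≫ K.assoc a b (K.tensor c d)) ∧
  -- rectangle : λ ∘ α = λ ⊗ id
  (∀ a b : S, K.assoc K.unit a b ≫ K.lunit (K.tensor a b) = K.tmap (K.lunit a) (𝟙 b)) ∧
  -- right : ρ' and α
  (∀ a b : S, K.runit (K.tensor a b) ≫ K.assoc a b K.unit = K.tmap (𝟙 a) (K.runit b)) ∧
  -- left : λ, α and ρ'
  (∀ a b : S,
    K.tmap (K.runit a) (𝟙 b) ≫ K.assoc a K.unit b ≫ K.tmap (𝟙 a) (K.lunit b) =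
      𝟙 (K.tensor a b)) ∧
  -- triangle
  (K.runit K.unit ≫ K.lunit K.unit = 𝟙 K.unit)


section Aux
variable {C : Type u} [Category.{v} C] [MonoidalCategory C]
  {A : Type u₁} [Category.{v₁} A]

/-- `map₁` applied to an iso is an iso. -/
noncomputable def Actegory.mapIso₁ (J : Actegory C A) {a b : A} (e : a ≅ b) (x : C) :
    J.act a x ≅ J.act b x where
  hom := J.map₁ e.hom x
  inv := J.map₁ e.inv x
  hom_inv_id := by rw [← J.map₁_comp, e.hom_inv_id, J.map₁_id]
  inv_hom_id := by rw [← J.map₁_comp, e.inv_hom_id, J.map₁_id]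

/-- The derived "right" triangle for an actegory. -/
theorem Actegory.right_triangle (J : Actegory C A) (a : A) (x : C) :
    (J.assoc a x (𝟙_ C)).hom ≫ J.map₂ a (ρ_ x).hom = (J.runit (J.act a x)).hom := by
  have key : ∀ z : C,
      J.map₁ ((J.assoc a x (𝟙_ C)).hom ≫ J.map₂ a (ρ_ x).hom) z =
      J.map₁ (J.runit (J.act a x)).hom z := by
    intro z
    have h := J.pentagon a x (𝟙_ C) z
    have htri := J.triangle (J.act a x) z
    -- cancel the iso assoc a x z on the right
    rw [← cancel_mono (J.assoc a x z).hom]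
    calc J.map₁ ((J.assoc a x (𝟙_ C)).hom ≫ J.map₂ a (ρ_ x).hom) z ≫ (J.assoc a x z).hom
        = J.map₁ (J.assoc a x (𝟙_ C)).hom z ≫
            (J.map₁ (J.map₂ a (ρ_ x).hom) z ≫ (J.assoc a x z).hom) := by
          rw [J.map₁_comp, Category.assoc]
      _ = J.map₁ (J.assoc a x (𝟙_ C)).hom z ≫
            (J.assoc a (x ⊗ 𝟙_ C) z).hom ≫ J.map₂ a ((ρ_ x).hom ▷ z) := by
          rw [J.assoc_nat₂]
      _ = J.map₁ (J.assoc a x (𝟙_ C)).hom z ≫ (J.assoc a (x ⊗ 𝟙_ C) z).hom ≫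
            J.map₂ a ((α_ x (𝟙_ C) z).hom ≫ (x ◁ (λ_ z).hom)) := by
          rw [MonoidalCategory.triangle]
      _ = (J.map₁ (J.assoc a x (𝟙_ C)).hom z ≫ (J.assoc a (x ⊗ 𝟙_ C) z).hom ≫
            J.map₂ a (α_ x (𝟙_ C) z).hom) ≫ J.map₂ a (x ◁ (λ_ z).hom) := by
          rw [J.map₂_comp]; simp [Category.assoc]
      _ = ((J.assoc (J.act a x) (𝟙_ C) z).hom ≫ (J.assoc a x (𝟙_ C ⊗ z)).hom) ≫
            J.map₂ a (x ◁ (λ_ z).hom) := by rw [← h]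
      _ = (J.assoc (J.act a x) (𝟙_ C) z).hom ≫
            (J.map₂ (J.act a x) (λ_ z).hom ≫ (J.assoc a x z).hom) := by
          rw [J.assoc_nat₃]; simp [Category.assoc]
      _ = J.map₁ (J.runit (J.act a x)).hom z ≫ (J.assoc a x z).hom := by
          rw [← Category.assoc, htri]
  have h1 := J.runit_nat ((J.assoc a x (𝟙_ C)).hom ≫ J.map₂ a (ρ_ x).hom)
  have h2 := J.runit_nat (J.runit (J.act a x)).hom
  rw [key (𝟙_ C), h2] at h1
  exact ((Iso.cancel_iso_hom_left (J.runit _) _ _).mp h1).symm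

noncomputable def Actegory.initial_act (J : Actegory C A) {o : A} (hI : IsInitial o)
    (hpres : ∀ b : C, IsIso (hI.to (J.act o b))) (b : C) : IsInitial (J.act o b) :=
  haveI := hpres b
  hI.ofIso (asIso (hI.to (J.act o b)))

end Aux

open Limits in
/-- The skew monoidal data on `C × A` induced by a `C`-actegory `A` with an initial object
`0` preserved by the action: tensor `(a,x) ⊗' (b,y) = (a ⊗ b, x ⊳ b)`, unit `(I, 0)`,
associator `(α_C, α_A)`, right unitor `(ρ⁻¹, ρ⁻¹)` and left unitor `(λ, !)`. -/
noncomputable def skewProdData (J : Actegory C A) (o : A) (hI : IsInitial o)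
    (hpres : ∀ b : C, IsIso (hI.to (J.act o b))) : SkewMonoidalStruct (C × A) where
  tensor p q := (p.1 ⊗ q.1, J.act p.2 q.1)
  tmap {p p' q q'} f g := (f.1 ⊗ₘ g.1, J.map₁ f.2 q.1 ≫ J.map₂ p'.2 g.1)
  unit := (𝟙_ C, o)
  assoc p q r := ((α_ p.1 q.1 r.1).hom, (J.assoc p.2 q.1 r.1).hom)
  lunit p := ((λ_ p.1).hom,
    (@CategoryTheory.inv A _ _ _ (hI.to (J.act o p.1)) (hpres p.1)) ≫ hI.to p.2)
  runit p := ((ρ_ p.1).inv, (J.runit p.2).inv)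

open Limits in
/-- The product `C × A` with the tensor `(a,x) ⊗' (b,y) = (a ⊗ b, x ⊳ b)`
and unit `(I, 0)` is a left-skew monoidal category, which is moreover associative (the
associator is invertible) and right-unital (the right unitor is invertible). -/
theorem skew_monoidal_of_actegory (J : Actegory C A) (o : A) (hI : IsInitial o)
    (hpres : ∀ b : C, IsIso (hI.to (J.act o b))) :
    IsSkewMonoidal (skewProdData J o hI hpres) ∧
    (∀ a b c : C × A, IsIso ((skewProdData J o hI hpres).assoc a b c)) ∧
    (∀ a : C × A, IsIso ((skewProdData J o hI hpres).runit a)) := by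
  classical
  have hinit : ∀ b : C, IsInitial (J.act o b) := J.initial_act hI hpres
  have hinit2 : ∀ (b c : C), IsInitial (J.act (J.act o b) c) := fun b c =>
    (hinit c).ofIso (J.mapIso₁ ((asIso (hI.to (J.act o b))).symm) c).symm
  refine ⟨⟨?_, ?_, ?_, ?_, ?_, ?_, ?_, ?_, ?_, ?_⟩, ?_, ?_⟩
  · intro a c
    dsimp [skewProdData]
    refine Prod.ext (by simp) ?_
    simp [J.map₁_id, J.map₂_id]
  · intro a b c d e f g g' h h'
    dsimp [skewProdData]
    refine Prod.ext (by simp) ?_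
    dsimp
    rw [J.map₁_comp, J.map₂_comp, Category.assoc, Category.assoc,
      ← Category.assoc (J.map₁ g'.2 d.1), J.exchange]
    simp [Category.assoc]
  · intro a a' b b' c c' f g h
    dsimp [skewProdData]
    refine Prod.ext (by simp) ?_
    dsimp
    calc (J.map₁ (J.map₁ f.2 b.1 ≫ J.map₂ a'.2 g.1) c.1 ≫
            J.map₂ (J.act a'.2 b'.1) h.1) ≫ (J.assoc a'.2 b'.1 c'.1).hom
        = J.map₁ (J.map₁ f.2 b.1) c.1 ≫ J.map₁ (J.map₂ a'.2 g.1) c.1 ≫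
            (J.map₂ (J.act a'.2 b'.1) h.1 ≫ (J.assoc a'.2 b'.1 c'.1).hom) := by
          rw [J.map₁_comp]; simp only [Category.assoc]
      _ = J.map₁ (J.map₁ f.2 b.1) c.1 ≫ (J.map₁ (J.map₂ a'.2 g.1) c.1 ≫
            (J.assoc a'.2 b'.1 c.1).hom) ≫ J.map₂ a'.2 (b'.1 ◁ h.1) := by
          rw [J.assoc_nat₃]; simp only [Category.assoc]
      _ = (J.map₁ (J.map₁ f.2 b.1) c.1 ≫ (J.assoc a'.2 b.1 c.1).hom) ≫
            J.map₂ a'.2 (g.1 ▷ c.1) ≫ J.map₂ a'.2 (b'.1 ◁ h.1) := by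
          rw [J.assoc_nat₂]; simp only [Category.assoc]
      _ = ((J.assoc a.2 b.1 c.1).hom ≫ J.map₁ f.2 (b.1 ⊗ c.1)) ≫
            J.map₂ a'.2 (g.1 ▷ c.1 ≫ b'.1 ◁ h.1) := by
          rw [J.assoc_nat₁, J.map₂_comp]
      _ = (J.assoc a.2 b.1 c.1).hom ≫ J.map₁ f.2 (b.1 ⊗ c.1) ≫
            J.map₂ a'.2 (g.1 ⊗ₘ h.1) := by
          rw [← MonoidalCategory.tensorHom_def]; simp only [Category.assoc]
  · intro a a' f
    dsimp [skewProdData]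
    refine Prod.ext (by simp) ?_
    exact (hinit a.1).hom_ext _ _
  · intro a a' f
    dsimp [skewProdData]
    refine Prod.ext (by simp) ?_
    dsimp
    rw [J.map₂_id, Category.comp_id, Iso.inv_comp_eq, ← Category.assoc,
      ← J.runit_nat f.2]
    simp
  · intro a b c d
    dsimp [skewProdData]
    refine Prod.ext ?_ ?_
    · dsimp
      simp [MonoidalCategory.tensorHom_id, MonoidalCategory.id_tensorHom,
        MonoidalCategory.pentagon]
    · dsimp
      rw [J.map₂_id, Category.comp_id, J.map₁_id, Category.id_comp]
      exact (J.pentagon a.2 b.1 c.1 d.1).symm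
  · intro a b
    dsimp [skewProdData]
    refine Prod.ext ?_ ?_
    · dsimp
      simp [MonoidalCategory.tensorHom_id]
    · exact (hinit2 a.1 b.1).hom_ext _ _
  · intro a b
    dsimp [skewProdData]
    refine Prod.ext ?_ ?_
    · dsimp
      simp [MonoidalCategory.id_tensorHom]
    · dsimp
      rw [J.map₁_id, Category.id_comp, ← cancel_epi (J.runit (J.act a.2 b.1)).hom,
        ← Category.assoc, Iso.hom_inv_id, Category.id_comp,
        ← J.right_triangle a.2 b.1, Category.assoc, ← J.map₂_comp]
      simp [J.map₂_id]
  · intro a b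
    dsimp [skewProdData]
    refine Prod.ext ?_ ?_
    · dsimp
      simp [MonoidalCategory.tensorHom_id, MonoidalCategory.id_tensorHom]
    · dsimp
      rw [J.map₁_id, Category.id_comp, J.map₂_id, Category.comp_id,
        J.triangle a.2 b.1, ← J.map₁_comp, Iso.inv_hom_id, J.map₁_id]
  · dsimp [skewProdData]
    refine Prod.ext ?_ ?_
    · dsimp
      rw [MonoidalCategory.unitors_equal, Iso.inv_hom_id]
    · exact hI.hom_ext _ _
  · intro a b c
    dsimp [skewProdData]
    refine ⟨⟨((α_ a.1 b.1 c.1).inv, (J.assoc a.2 b.1 c.1).inv), ?_, ?_⟩⟩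
    · exact Prod.ext (by simp) (by simp)
    · exact Prod.ext (by simp) (by simp)
  · intro a
    dsimp [skewProdData]
    refine ⟨⟨((ρ_ a.1).hom, (J.runit a.2).hom), ?_, ?_⟩⟩
    · exact Prod.ext (by simp) (by simp)
    · exact Prod.ext (by simp) (by simp)
end
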